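/- Along solutions of the error system with |γ̄| = 1 and δ = v̄ − (g/k₁ᵛ)(e₃ − γ̄), one has d/dt (1 − e₃ᵀγ̄) = −k₁ʳ (δ × γ̄)ᵀ(e₃ × γ̄) − (g k₁ʳ/k₁ᵛ)|e₃ × γ̄|², and hence d/dt (1 − e₃ᵀγ̄) ≤ k₁ʳ |δ| |e₃ × γ̄| − (g k₁ʳ/k₁ᵛ)|e₃ × γ̄|². -/

import Mathlib

open Matrix

noncomputable section

def cross3 (u v : Fin 3 → ℝ) : Fin 3 → ℝ :=
  ![u 1 * v 2 - u 2 * v 1, u 2 * v 0 - u 0 * v 2, u 0 * v 1 - u 1 * v 0]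

def norm3 (u : Fin 3 → ℝ) : ℝ := Real.sqrt (u ⬝ᵥ u)

def e3 : Fin 3 → ℝ := ![0, 0, 1]

lemma dot_self_nonneg3 (u : Fin 3 → ℝ) : 0 ≤ u ⬝ᵥ u := by
  simp [dotProduct, Fin.sum_univ_three]
  nlinarith [sq_nonneg (u 0), sq_nonneg (u 1), sq_nonneg (u 2)]

lemma norm3_sq (u : Fin 3 → ℝ) : (norm3 u)^2 = u ⬝ᵥ u := by
  rw [norm3, Real.sq_sqrt (dot_self_nonneg3 u)]

lemma cauchy3 (a b : Fin 3 → ℝ) : -(a ⬝ᵥ b) ≤ norm3 a * norm3 b := by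
  have h1 : (-(a ⬝ᵥ b))^2 ≤ (a ⬝ᵥ a) * (b ⬝ᵥ b) := by
    simp only [dotProduct, Fin.sum_univ_three]
    nlinarith [sq_nonneg (a 0 * b 1 - a 1 * b 0), sq_nonneg (a 0 * b 2 - a 2 * b 0),
      sq_nonneg (a 1 * b 2 - a 2 * b 1)]
  have h2 : 0 ≤ norm3 a * norm3 b := mul_nonneg (Real.sqrt_nonneg _) (Real.sqrt_nonneg _)
  nlinarith [norm3_sq a, norm3_sq b]

/-- the derivative of `1 − e₃ᵀγ̄` along the error system equals
`−k₁ʳ(δ×γ̄)ᵀ(e₃×γ̄) − (g k₁ʳ/k₁ᵛ)|e₃×γ̄|²` and is bounded above by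
`k₁ʳ|δ||e₃×γ̄| − (g k₁ʳ/k₁ᵛ)|e₃×γ̄|²`. -/
theorem stmt_4 (g k1v k1r : ℝ) (hg : 0 < g) (h1 : 0 < k1v) (h3 : 0 < k1r)
    (v γ : ℝ → Fin 3 → ℝ) (hγunit : ∀ t, norm3 (γ t) = 1)
    (hγ : ∀ t, HasDerivAt γ (-(k1r • cross3 (γ t) (cross3 (γ t) (v t)))) t)
    (δ : ℝ → Fin 3 → ℝ) (hδ : ∀ t, δ t = v t - (g / k1v) • (e3 - γ t)) :
    ∀ t,
      HasDerivAt (fun s => 1 - e3 ⬝ᵥ γ s)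
        (-(k1r * (cross3 (δ t) (γ t) ⬝ᵥ cross3 e3 (γ t)))
          - (g * k1r / k1v) * (cross3 e3 (γ t) ⬝ᵥ cross3 e3 (γ t))) t ∧
      -(k1r * (cross3 (δ t) (γ t) ⬝ᵥ cross3 e3 (γ t)))
          - (g * k1r / k1v) * (cross3 e3 (γ t) ⬝ᵥ cross3 e3 (γ t)) ≤
        k1r * norm3 (δ t) * norm3 (cross3 e3 (γ t))
          - (g * k1r / k1v) * (norm3 (cross3 e3 (γ t)))^2 := by
  intro t
  have hunit : γ t ⬝ᵥ γ t = 1 := by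
    have := hγunit t
    have h0 := dot_self_nonneg3 (γ t)
    have : Real.sqrt (γ t ⬝ᵥ γ t) = 1 := this
    nlinarith [Real.sq_sqrt h0]
  constructor
  · -- derivative
    have h2 := hasDerivAt_pi.mp (hγ t) 2
    have hfun : (fun s => 1 - e3 ⬝ᵥ γ s) = (fun s => 1 - γ s 2) := by
      funext s; simp [e3, dotProduct, Fin.sum_univ_three]
    rw [hfun]
    have hd : HasDerivAt (fun s => 1 - γ s 2) _ t := (hasDerivAt_const t (1:ℝ)).sub h2
    convert hd using 1
    have hδt := hδ t
    have hδ0 : δ t 0 = v t 0 - (g / k1v) * (e3 0 - γ t 0) := by rw [hδt]; simp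
    have hδ1 : δ t 1 = v t 1 - (g / k1v) * (e3 1 - γ t 1) := by rw [hδt]; simp
    have hδ2 : δ t 2 = v t 2 - (g / k1v) * (e3 2 - γ t 2) := by rw [hδt]; simp
    simp only [cross3, e3, dotProduct, Fin.sum_univ_three] at *
    simp only [Pi.neg_apply, Pi.smul_apply, smul_eq_mul, Matrix.cons_val_zero,
      Matrix.cons_val_one, Matrix.head_cons, Matrix.cons_val_two, Matrix.tail_cons] at *
    rw [hδ0, hδ1, hδ2]
    field_simp
    ring_nf
  · -- bound
    have hc := cauchy3 (cross3 (δ t) (γ t)) (cross3 e3 (γ t))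
    have hlag : norm3 (cross3 (δ t) (γ t)) ≤ norm3 (δ t) := by
      have h1 : (norm3 (cross3 (δ t) (γ t)))^2 ≤ (norm3 (δ t))^2 := by
        rw [norm3_sq, norm3_sq]
        have := hunit
        simp only [cross3, dotProduct, Fin.sum_univ_three, Matrix.cons_val_zero,
          Matrix.cons_val_one, Matrix.head_cons, Matrix.cons_val_two, Matrix.tail_cons] at *
        nlinarith [sq_nonneg (δ t 0 * γ t 0 + δ t 1 * γ t 1 + δ t 2 * γ t 2)]
      have hn1 : 0 ≤ norm3 (δ t) := Real.sqrt_nonneg _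
      have hn2 : 0 ≤ norm3 (cross3 (δ t) (γ t)) := Real.sqrt_nonneg _
      nlinarith
    have hB : 0 ≤ norm3 (cross3 e3 (γ t)) := Real.sqrt_nonneg _
    have key : -(cross3 (δ t) (γ t) ⬝ᵥ cross3 e3 (γ t)) ≤ norm3 (δ t) * norm3 (cross3 e3 (γ t)) := by
      calc -(cross3 (δ t) (γ t) ⬝ᵥ cross3 e3 (γ t)) ≤ norm3 (cross3 (δ t) (γ t)) * norm3 (cross3 e3 (γ t)) := hc
        _ ≤ norm3 (δ t) * norm3 (cross3 e3 (γ t)) := by nlinarith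
    rw [norm3_sq]
    nlinarith
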